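/- For the black soliton ψ₀(x) = √(−ω) tanh(√(−ω/2) x) with ω < 0 and the potential V(x) = cos(2x), the Melnikov-type integral ∫_ℝ V'(x) ψ₀(x) ψ₀'(x) dx equals −8π / sinh(√(2/(−ω)) π); in particular it is nonzero for every ω < 0. -/

import Mathlib

open MeasureTheory


open MeasureTheory

lemma my_hasDerivAt_tanh (x : ℝ) : HasDerivAt Real.tanh (1 / Real.cosh x ^ 2) x := by
  have h := (Real.hasDerivAt_sinh x).div (Real.hasDerivAt_cosh x) (Real.cosh_pos x).ne'
  have he : (fun y => Real.sinh y / Real.cosh y) = Real.tanh := by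
    funext y; rw [Real.tanh_eq_sinh_div_cosh]
  rw [show Real.sinh / Real.cosh = fun y => Real.sinh y / Real.cosh y from rfl, he] at h
  replace h : HasDerivAt Real.tanh ((Real.cosh x * Real.cosh x - Real.sinh x * Real.sinh x) / Real.cosh x ^ 2) x := h
  convert h using 1
  have := Real.cosh_sq_sub_sinh_sq x
  field_simp
  nlinarith [Real.cosh_pos x]

lemma gamma_pair (b : ℝ) (hb : 0 < b) :
    Complex.Gamma (1 + Complex.I * b) * Complex.Gamma (1 - Complex.I * b)
      = ((Real.pi * b / Real.sinh (Real.pi * b) : ℝ) : ℂ) := by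
  have hib : (Complex.I * (b:ℂ)) ≠ 0 := by
    simp [Complex.I_ne_zero, Complex.ofReal_ne_zero, hb.ne']
  have h1 : Complex.Gamma (Complex.I * b + 1) = Complex.I * b * Complex.Gamma (Complex.I * b) :=
    Complex.Gamma_add_one _ hib
  have h2 := Complex.Gamma_mul_Gamma_one_sub (Complex.I * (b:ℂ))
  have hsin : Complex.sin (↑Real.pi * (Complex.I * b)) = (Real.sinh (Real.pi * b) : ℂ) * Complex.I := by
    have h3 : (↑Real.pi * (Complex.I * (b:ℂ))) = (((Real.pi * b : ℝ) : ℂ)) * Complex.I := by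
      push_cast; ring
    rw [h3, Complex.sin_mul_I, Complex.ofReal_sinh]
  have hsh : Real.sinh (Real.pi * b) ≠ 0 :=
    (Real.sinh_pos_iff.2 (by positivity)).ne'
  calc Complex.Gamma (1 + Complex.I * b) * Complex.Gamma (1 - Complex.I * b)
      = Complex.I * b * (Complex.Gamma (Complex.I * b) * Complex.Gamma (1 - Complex.I * b)) := by
        rw [show (1 : ℂ) + Complex.I * b = Complex.I * b + 1 by ring, h1]; ring
    _ = Complex.I * b * (↑Real.pi / (↑(Real.sinh (Real.pi * b)) * Complex.I)) := by
        rw [h2, hsin]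
    _ = ((Real.pi * b / Real.sinh (Real.pi * b) : ℝ) : ℂ) := by
        rw [show Complex.I * b * (↑Real.pi / (↑(Real.sinh (Real.pi * b)) * Complex.I))
            = ((b:ℂ) * ↑Real.pi / ↑(Real.sinh (Real.pi * b))) * (Complex.I / Complex.I) by ring,
          div_self Complex.I_ne_zero, mul_one]
        push_cast
        ring

noncomputable def gfun (b : ℝ) : ℝ → ℂ := fun t =>
  (t:ℂ) ^ (Complex.I * b) * ((1 - t : ℝ) : ℂ) ^ (-(Complex.I * b)) * ((2*t - 1 : ℝ) : ℂ)

lemma gfun_eqOn (b : ℝ) : Set.EqOn (gfun b)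
    (fun t : ℝ => 2 * ((t:ℂ) ^ ((2+(Complex.I * b))-1) * (1-(t:ℂ)) ^ ((1-(Complex.I * b))-1))
      - ((t:ℂ) ^ ((1+(Complex.I * b))-1) * (1-(t:ℂ)) ^ ((1-(Complex.I * b))-1)))
    (Set.Ioo (0:ℝ) 1) := by
  intro t ht
  obtain ⟨ht0, ht1⟩ := ht
  have htne : (t:ℂ) ≠ 0 := by exact_mod_cast ht0.ne'
  simp only [gfun]
  rw [show (2+(Complex.I * (b:ℂ)))-1 = 1+(Complex.I * b) by ring,
    show (1+(Complex.I * (b:ℂ)))-1 = Complex.I * b by ring,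
    show (1-(Complex.I * (b:ℂ)))-1 = -(Complex.I * b) by ring,
    Complex.cpow_add _ _ htne, Complex.cpow_one]
  push_cast
  ring

lemma gfun_kre (b : ℝ) : (Complex.I * (b:ℂ)).re = 0 := by simp

lemma gfun_integrableOn (b : ℝ) : IntegrableOn (gfun b) (Set.Ioo (0:ℝ) 1) volume := by
  set k : ℂ := Complex.I * (b:ℂ) with hk
  have hre2 : 0 < ((2:ℂ)+k).re := by simp [hk]
  have hre1 : 0 < ((1:ℂ)+k).re := by simp [hk]
  have hre1' : 0 < ((1:ℂ)-k).re := by simp [hk, Complex.sub_re]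
  have hint1 : IntegrableOn (fun t : ℝ => (t:ℂ) ^ ((2+k)-1) * (1-(t:ℂ)) ^ ((1-k)-1))
      (Set.Ioo (0:ℝ) 1) volume := by
    have := Complex.betaIntegral_convergent hre2 hre1'
    rwa [intervalIntegrable_iff_integrableOn_Ioo_of_le zero_le_one] at this
  have hint2 : IntegrableOn (fun t : ℝ => (t:ℂ) ^ ((1+k)-1) * (1-(t:ℂ)) ^ ((1-k)-1))
      (Set.Ioo (0:ℝ) 1) volume := by
    have := Complex.betaIntegral_convergent hre1 hre1'
    rwa [intervalIntegrable_iff_integrableOn_Ioo_of_le zero_le_one] at this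
  have hcomb : IntegrableOn
      (fun t : ℝ => 2 * ((t:ℂ) ^ ((2+k)-1) * (1-(t:ℂ)) ^ ((1-k)-1))
        - ((t:ℂ) ^ ((1+k)-1) * (1-(t:ℂ)) ^ ((1-k)-1))) (Set.Ioo (0:ℝ) 1) volume := by
    exact (hint1.const_mul 2).sub hint2
  exact hcomb.congr_fun (gfun_eqOn b).symm measurableSet_Ioo

lemma beta_part (b : ℝ) (hb : 0 < b) :
    (∫ t in Set.Ioo (0:ℝ) 1, gfun b t)
      = Complex.I * b * ((Real.pi * b / Real.sinh (Real.pi * b) : ℝ) : ℂ) := by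
  have hN := gamma_pair b hb
  set k : ℂ := Complex.I * (b:ℂ) with hk
  have h1k : (1 : ℂ) + k ≠ 0 :=
    fun h => by simpa [hk] using congrArg Complex.re h
  set h₁ : ℝ → ℂ := fun t => (t:ℂ) ^ ((2+k)-1) * (1-(t:ℂ)) ^ ((1-k)-1) with hh1
  set h₂ : ℝ → ℂ := fun t => (t:ℂ) ^ ((1+k)-1) * (1-(t:ℂ)) ^ ((1-k)-1) with hh2
  have hre2 : 0 < ((2:ℂ)+k).re := by simp [hk]
  have hre1 : 0 < ((1:ℂ)+k).re := by simp [hk]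
  have hre1' : 0 < ((1:ℂ)-k).re := by simp [hk, Complex.sub_re]
  have hint1 : IntegrableOn h₁ (Set.Ioo (0:ℝ) 1) volume := by
    have := Complex.betaIntegral_convergent hre2 hre1'
    rwa [intervalIntegrable_iff_integrableOn_Ioo_of_le zero_le_one] at this
  have hint2 : IntegrableOn h₂ (Set.Ioo (0:ℝ) 1) volume := by
    have := Complex.betaIntegral_convergent hre1 hre1'
    rwa [intervalIntegrable_iff_integrableOn_Ioo_of_le zero_le_one] at this
  have hIoo : (∫ t in Set.Ioo (0:ℝ) 1, gfun b t)
      = 2 * (∫ t in Set.Ioo (0:ℝ) 1, h₁ t) - ∫ t in Set.Ioo (0:ℝ) 1, h₂ t := by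
    rw [setIntegral_congr_fun measurableSet_Ioo (gfun_eqOn b)]
    rw [integral_sub ((hint1.const_mul 2)) hint2, integral_const_mul]
  have hbeta1 : (∫ t in Set.Ioo (0:ℝ) 1, h₁ t) = Complex.betaIntegral (2+k) (1-k) := by
    rw [Complex.betaIntegral, intervalIntegral.integral_of_le zero_le_one,
      integral_Ioc_eq_integral_Ioo]
  have hbeta2 : (∫ t in Set.Ioo (0:ℝ) 1, h₂ t) = Complex.betaIntegral (1+k) (1-k) := by
    rw [Complex.betaIntegral, intervalIntegral.integral_of_le zero_le_one,
      integral_Ioc_eq_integral_Ioo]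
  have hG3 : Complex.Gamma ((2+k)+(1-k)) = 2 := by
    rw [show (2+k)+(1-k) = (2:ℂ) + 1 by ring, Complex.Gamma_add_one 2 two_ne_zero,
      show (2:ℂ) = 1 + 1 by norm_num, Complex.Gamma_add_one 1 one_ne_zero, Complex.Gamma_one]
    norm_num
  have hG2 : Complex.Gamma ((1+k)+(1-k)) = 1 := by
    rw [show (1+k)+(1-k) = (1:ℂ) + 1 by ring, Complex.Gamma_add_one 1 one_ne_zero,
      Complex.Gamma_one]
    norm_num
  have hb1 := Complex.Gamma_mul_Gamma_eq_betaIntegral hre2 hre1'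
  have hb2 := Complex.Gamma_mul_Gamma_eq_betaIntegral hre1 hre1'
  rw [hG3] at hb1
  rw [hG2, one_mul] at hb2
  have hG2k : Complex.Gamma (2+k) = (1+k) * Complex.Gamma (1+k) := by
    rw [show (2:ℂ)+k = (1+k)+1 by ring, Complex.Gamma_add_one _ h1k]
  have hval1 : Complex.betaIntegral (2+k) (1-k)
      = (1+k) * ((Real.pi * b / Real.sinh (Real.pi * b) : ℝ) : ℂ) / 2 := by
    rw [hG2k, mul_assoc, hN] at hb1
    linear_combination (-1/2 : ℂ) * hb1
  have hval2 : Complex.betaIntegral (1+k) (1-k)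
      = ((Real.pi * b / Real.sinh (Real.pi * b) : ℝ) : ℂ) := by
    rw [← hb2]; exact hN
  rw [hIoo, hbeta1, hbeta2, hval1, hval2]
  ring

lemma subst_main (a : ℝ) (ha : 0 < a) :
    Integrable (fun x : ℝ =>
      Complex.exp ((2*x : ℝ) * Complex.I) * ((Real.tanh (a*x) / Real.cosh (a*x)^2 : ℝ) : ℂ)) volume ∧
    (∫ x : ℝ, Complex.exp ((2*x : ℝ) * Complex.I) * ((Real.tanh (a*x) / Real.cosh (a*x)^2 : ℝ) : ℂ))
      = ∫ t in Set.Ioo (0:ℝ) 1, ((2/a : ℝ) : ℂ) * gfun (1/a) t := by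
  set b : ℝ := 1/a with hbdef
  have hab : a * b = 1 := by simp only [hbdef]; field_simp
  set f : ℝ → ℝ := fun x => (1 + Real.exp (-(2*a*x)))⁻¹ with hfdef
  set f' : ℝ → ℝ := fun x => 2*a*Real.exp (-(2*a*x)) / (1 + Real.exp (-(2*a*x)))^2 with hf'def
  have hEpos : ∀ x : ℝ, 0 < Real.exp (-(2*a*x)) := fun x => Real.exp_pos _
  have hDpos : ∀ x : ℝ, 0 < 1 + Real.exp (-(2*a*x)) := fun x => by positivity
  have hf'pos : ∀ x : ℝ, 0 < f' x := fun x => by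
    simp only [hf'def]; positivity
  have hderiv : ∀ x : ℝ, HasDerivAt f (f' x) x := by
    intro x
    have h1 : HasDerivAt (fun y : ℝ => -(2*a*y)) (-(2*a)) x := by
      have := ((hasDerivAt_id x).const_mul (2*a)).neg
      simp only [id, mul_one] at this
      exact this
    have h2 : HasDerivAt (fun y : ℝ => Real.exp (-(2*a*y)))
        (Real.exp (-(2*a*x)) * (-(2*a))) x := (Real.hasDerivAt_exp _).comp x h1
    have h3 : HasDerivAt (fun y : ℝ => 1 + Real.exp (-(2*a*y)))
        (Real.exp (-(2*a*x)) * (-(2*a))) x := h2.const_add 1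
    have h4 : HasDerivAt (fun y : ℝ => (1 + Real.exp (-(2*a*y)))⁻¹)
        (-(Real.exp (-(2*a*x)) * (-(2*a))) / (1 + Real.exp (-(2*a*x)))^2) x := h3.inv (hDpos x).ne'
    convert h4 using 1
    simp only [hf'def]
    field_simp
  have hmono : StrictMono f := by
    intro x y hxy
    simp only [hfdef]
    have hE : Real.exp (-(2*a*y)) < Real.exp (-(2*a*x)) :=
      Real.exp_lt_exp.2 (by nlinarith)
    exact inv_strictAnti₀ (hDpos y) (by linarith)
  have hinj : Set.InjOn f Set.univ := hmono.injective.injOn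
  have himg : f '' Set.univ = Set.Ioo 0 1 := by
    rw [Set.image_univ]
    ext t
    constructor
    · rintro ⟨x, rfl⟩
      exact ⟨by positivity, by
        rw [inv_lt_one_iff₀]
        right
        linarith [hEpos x]⟩
    · rintro ⟨ht0, ht1⟩
      refine ⟨Real.log ((1-t)/t) / (-(2*a)), ?_⟩
      have h2a : (-(2*a)) ≠ 0 := by linarith
      simp only [hfdef]
      rw [show -(2*a*(Real.log ((1-t)/t) / (-(2*a)))) = Real.log ((1-t)/t) by field_simp]
      rw [Real.exp_log (div_pos (by linarith) ht0)]
      rw [show 1 + (1-t)/t = 1/t by field_simp; ring]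
      simp [ht0.ne']
  -- the pointwise identity
  have hpt : ∀ x : ℝ, |f' x| • (((2/a : ℝ) : ℂ) * gfun b (f x))
      = Complex.exp ((2*x : ℝ) * Complex.I) * ((Real.tanh (a*x) / Real.cosh (a*x)^2 : ℝ) : ℂ) := by
    intro x
    have hPpos : 0 < Real.exp (a*x) := Real.exp_pos _
    set P : ℝ := Real.exp (a*x) with hP
    have hEP : Real.exp (-(2*a*x)) = P⁻¹ * P⁻¹ := by
      rw [hP, ← Real.exp_neg, ← Real.exp_add]; ring_nf
    have hsinh : Real.sinh (a*x) = (P - P⁻¹)/2 := by rw [Real.sinh_eq, Real.exp_neg]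
    have hcosh : Real.cosh (a*x) = (P + P⁻¹)/2 := by rw [Real.cosh_eq, Real.exp_neg]
    have hcoshpos : 0 < P + P⁻¹ := by positivity
    have ht0 : 0 < f x := by simp only [hfdef]; positivity
    have ht1 : f x < 1 := by
      simp only [hfdef]
      rw [inv_lt_one_iff₀]
      right
      linarith [hEpos x]
    have htanh : Real.tanh (a*x) = 2 * f x - 1 := by
      rw [Real.tanh_eq_sinh_div_cosh, hsinh, hcosh]
      simp only [hfdef]
      rw [hEP]
      have h1 : (1 : ℝ) + P⁻¹ * P⁻¹ ≠ 0 := by positivity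
      field_simp
      ring
    have hsech : f' x * (2/a) = 1 / Real.cosh (a*x)^2 := by
      simp only [hf'def]
      rw [hcosh, hEP]
      have h1 : (1 : ℝ) + P⁻¹ * P⁻¹ ≠ 0 := by positivity
      field_simp
    have hlogr : f x / (1 - f x) = Real.exp (2*a*x) := by
      simp only [hfdef]
      rw [hEP]
      have h1 : (1 : ℝ) + P⁻¹ * P⁻¹ ≠ 0 := by positivity
      rw [show Real.exp (2*a*x) = P * P by rw [hP, ← Real.exp_add]; ring_nf]
      field_simp
      ring
    have hlog : Real.log (f x) - Real.log (1 - f x) = 2*a*x := by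
      rw [← Real.log_div ht0.ne' (by linarith), hlogr, Real.log_exp]
    have hcp1 : ((f x : ℝ):ℂ) ^ (Complex.I * (b:ℝ))
        = Complex.exp (Complex.I * b * (Real.log (f x) : ℝ)) := by
      rw [Complex.cpow_def_of_ne_zero (by exact_mod_cast ht0.ne'),
        ← Complex.ofReal_log ht0.le, mul_comm]
    have hcp2 : ((1 - f x : ℝ):ℂ) ^ (-(Complex.I * (b:ℝ)))
        = Complex.exp (-(Complex.I * b) * (Real.log (1 - f x) : ℝ)) := by
      rw [Complex.cpow_def_of_ne_zero (by
          have : (0:ℝ) < 1 - f x := by linarith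
          exact_mod_cast this.ne'),
        ← Complex.ofReal_log (by linarith), mul_comm]
    have harg : Complex.I * b * (Real.log (f x) : ℝ) + (-(Complex.I * b)) * (Real.log (1 - f x) : ℝ)
        = ((2*x : ℝ) : ℂ) * Complex.I := by
      have hr : b * (Real.log (f x) - Real.log (1 - f x)) = 2*x := by
        rw [hlog]; linear_combination (2*x) * hab
      calc Complex.I * b * (Real.log (f x) : ℝ) + (-(Complex.I * b)) * (Real.log (1 - f x) : ℝ)
          = Complex.I * ((b * (Real.log (f x) - Real.log (1 - f x)) : ℝ) : ℂ) := by
            push_cast; ring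
        _ = ((2*x : ℝ) : ℂ) * Complex.I := by rw [hr]; ring
    have hsechC : ((f' x : ℝ):ℂ) * ((2/a : ℝ):ℂ) = ((1 / Real.cosh (a*x)^2 : ℝ):ℂ) := by
      rw [← Complex.ofReal_mul, hsech]
    rw [abs_of_pos (hf'pos x), Complex.real_smul]
    simp only [gfun]
    rw [hcp1, hcp2, ← Complex.exp_add, harg, htanh]
    calc ((f' x : ℝ) : ℂ) * (((2/a : ℝ) : ℂ) * (Complex.exp (((2*x:ℝ):ℂ) * Complex.I) * ((2 * f x - 1 : ℝ) : ℂ)))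
        = (((f' x : ℝ) : ℂ) * ((2/a : ℝ) : ℂ)) * (Complex.exp (((2*x:ℝ):ℂ) * Complex.I) * ((2 * f x - 1 : ℝ) : ℂ)) := by
          ring
      _ = Complex.exp (((2*x:ℝ):ℂ) * Complex.I) * (((2 * f x - 1) / Real.cosh (a*x)^2 : ℝ) : ℂ) := by
          rw [hsechC]; push_cast; ring
  have hkey : (fun x : ℝ => |f' x| • (((2/a : ℝ) : ℂ) * gfun b (f x)))
      = fun x : ℝ => Complex.exp ((2*x : ℝ) * Complex.I) * ((Real.tanh (a*x) / Real.cosh (a*x)^2 : ℝ) : ℂ) :=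
    funext hpt
  have hgint : IntegrableOn (fun t => ((2/a : ℝ) : ℂ) * gfun b t) (Set.Ioo (0:ℝ) 1) volume :=
    (gfun_integrableOn b).const_mul _
  constructor
  · have h := (integrableOn_image_iff_integrableOn_abs_deriv_smul MeasurableSet.univ
      (fun x _ => (hderiv x).hasDerivWithinAt) hinj (fun t => ((2/a : ℝ) : ℂ) * gfun b t)).mp
      (by rw [himg]; exact hgint)
    rw [integrableOn_univ] at h
    rwa [hkey] at h
  · have h := integral_image_eq_integral_abs_deriv_smul MeasurableSet.univ
      (fun x _ => (hderiv x).hasDerivWithinAt) hinj (fun t => ((2/a : ℝ) : ℂ) * gfun b t)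
    rw [himg, setIntegral_univ, hkey] at h
    exact h.symm


/-- For the black soliton `ψ₀(x) = √(−ω) tanh(√(−ω/2) x)` (ω < 0) and the potential
`V(x) = cos(2x)`, the Melnikov integral `∫ V'(x) ψ₀(x) ψ₀'(x) dx` equals
`−8π / sinh(√(2/(−ω)) π)`; in particular it is nonzero. -/
theorem melnikov_integral_cos (ω : ℝ) (hω : ω < 0) :
    (∫ x : ℝ,
        deriv (fun y : ℝ => Real.cos (2 * y)) x *
          (Real.sqrt (-ω) * Real.tanh (Real.sqrt (-ω / 2) * x)) *
          deriv (fun y : ℝ => Real.sqrt (-ω) * Real.tanh (Real.sqrt (-ω / 2) * y)) x)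
      = -(8 * Real.pi) / Real.sinh (Real.sqrt (2 / (-ω)) * Real.pi) ∧
    (∫ x : ℝ,
        deriv (fun y : ℝ => Real.cos (2 * y)) x *
          (Real.sqrt (-ω) * Real.tanh (Real.sqrt (-ω / 2) * x)) *
          deriv (fun y : ℝ => Real.sqrt (-ω) * Real.tanh (Real.sqrt (-ω / 2) * y)) x) ≠ 0 := by

  have hω' : 0 < -ω := by linarith
  set a : ℝ := Real.sqrt (-ω / 2) with hadef
  have ha : 0 < a := Real.sqrt_pos.2 (by linarith)
  have ha2 : a^2 = -ω/2 := Real.sq_sqrt (by linarith)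
  set b : ℝ := 1/a with hbdef
  have hb : 0 < b := by positivity
  have hsq : Real.sqrt (-ω) * Real.sqrt (-ω) = -ω := Real.mul_self_sqrt hω'.le
  have hbs : Real.sqrt (2/(-ω)) = b := by
    rw [show (2/(-ω)) = (-ω/2)⁻¹ by rw [inv_div], Real.sqrt_inv, ← hadef, hbdef, one_div]
  have hS : 0 < Real.sinh (Real.pi * b) := Real.sinh_pos_iff.2 (by positivity)
  have hd1 : ∀ x : ℝ, deriv (fun y : ℝ => Real.cos (2*y)) x = -2 * Real.sin (2*x) := by
    intro x
    have h1 : HasDerivAt (fun y : ℝ => 2*y) 2 x := by simpa using (hasDerivAt_id x).const_mul 2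
    have h2 : HasDerivAt (fun y : ℝ => Real.cos (2*y)) (-Real.sin (2*x) * 2) x :=
      (Real.hasDerivAt_cos (2*x)).comp x h1
    rw [h2.deriv]; ring
  have hd2 : ∀ x : ℝ, deriv (fun y : ℝ => Real.sqrt (-ω) * Real.tanh (a*y)) x
      = Real.sqrt (-ω) * (a * (1/Real.cosh (a*x)^2)) := by
    intro x
    have h1 : HasDerivAt (fun y : ℝ => a*y) a x := by simpa using (hasDerivAt_id x).const_mul a
    have h2 : HasDerivAt (fun y : ℝ => Real.tanh (a*y)) (1/Real.cosh (a*x)^2 * a) x :=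
      (my_hasDerivAt_tanh (a*x)).comp x h1
    have h3 := h2.const_mul (Real.sqrt (-ω))
    rw [h3.deriv]; ring
  obtain ⟨hGint, hGeq⟩ := subst_main a ha
  rw [← hbdef] at hGeq
  have hbeta := beta_part b hb
  have hIm : (∫ x : ℝ, Complex.exp ((2*x : ℝ) * Complex.I)
        * ((Real.tanh (a*x) / Real.cosh (a*x)^2 : ℝ) : ℂ)).im
      = (2/a) * (b * (Real.pi * b / Real.sinh (Real.pi * b))) := by
    rw [hGeq, integral_const_mul, hbeta]
    rw [show ((2/a : ℝ):ℂ) * (Complex.I * ↑b * ((Real.pi * b / Real.sinh (Real.pi * b) : ℝ) : ℂ))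
        = Complex.I * (((2/a) * (b * (Real.pi * b / Real.sinh (Real.pi * b))) : ℝ) : ℂ) by
      push_cast; ring]
    simp only [Complex.mul_im, Complex.I_re, Complex.I_im, Complex.ofReal_re, Complex.ofReal_im]
    ring
  have hint : ∫ x : ℝ, Real.sin (2*x) * (Real.tanh (a*x) / Real.cosh (a*x)^2)
      = (2/a) * (b * (Real.pi * b / Real.sinh (Real.pi * b))) := by
    have him := integral_im (μ := volume) hGint
    simp only [RCLike.im_eq_complex_im] at him
    rw [← hIm, ← him]
    congr 1
    funext x
    simp only [Complex.mul_im, Complex.ofReal_re, Complex.ofReal_im,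
      Complex.exp_ofReal_mul_I_im, Complex.exp_ofReal_mul_I_re]
    ring
  have hfeq : (fun x : ℝ =>
      deriv (fun y : ℝ => Real.cos (2 * y)) x * (Real.sqrt (-ω) * Real.tanh (a * x)) *
        deriv (fun y : ℝ => Real.sqrt (-ω) * Real.tanh (a * y)) x)
      = fun x : ℝ => (2*ω*a) * (Real.sin (2*x) * (Real.tanh (a*x) / Real.cosh (a*x)^2)) := by
    funext x
    rw [hd1 x, hd2 x]
    rw [show -2 * Real.sin (2*x) * (Real.sqrt (-ω) * Real.tanh (a*x))
          * (Real.sqrt (-ω) * (a * (1/Real.cosh (a*x)^2)))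
        = (Real.sqrt (-ω) * Real.sqrt (-ω))
          * (-2 * Real.sin (2*x) * Real.tanh (a*x) * a * (1/Real.cosh (a*x)^2)) by ring, hsq]
    ring
  have hω2 : ω = -2*a^2 := by nlinarith [ha2]
  have hval : (∫ x : ℝ,
        deriv (fun y : ℝ => Real.cos (2 * y)) x * (Real.sqrt (-ω) * Real.tanh (a * x)) *
          deriv (fun y : ℝ => Real.sqrt (-ω) * Real.tanh (a * y)) x)
      = -(8 * Real.pi) / Real.sinh (Real.sqrt (2 / (-ω)) * Real.pi) := by
    rw [hfeq, integral_const_mul, hint, hbs]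
    rw [show b * Real.pi = Real.pi * b by ring]
    rw [hω2, hbdef]
    have hSne : Real.sinh (Real.pi * (1/a)) ≠ 0 := by
      rw [show Real.pi * (1/a) = Real.pi * b by rw [hbdef]]
      exact hS.ne'
    field_simp
    ring
  exact ⟨hval, by
    rw [hval]
    apply div_ne_zero
    · have := Real.pi_pos; intro h; nlinarith
    · rw [hbs, show b * Real.pi = Real.pi * b by ring]
      exact hS.ne'⟩
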